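/- For every n > 4 there exists an ordering O of {0,1}^n such that for every complete depth-n decision tree T on the n variables, the number of inversions d(O, O(T)) is at least 2^{n-2}, where d(O, O(T)) = |{α' ∈ {0,1}^n : ∃α ∈ {0,1}^n with α' <_O α and α <_{O(T)} α'}|. -/

import Mathlib

/-- Complete decision trees on the variable set `s ⊆ Fin n`. -/
inductive DTree (n : ℕ) : Finset (Fin n) → Type where
  | leaf : DTree n ∅
  | node (i : Fin n) (b : Bool) {s : Finset (Fin n)} (hi : i ∉ s)
      (left right : DTree n s) : DTree n (insert i s)

/-- The left-to-right list of leaf labels. -/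
def DTree.leaves {n : ℕ} : {s : Finset (Fin n)} → DTree n s → (Fin n → Bool) → List (Fin n → Bool)
  | _, .leaf, f => [f]
  | _, .node i b _ l r, f =>
      l.leaves (Function.update f i b) ++ r.leaves (Function.update f i (!b))

/-- `d(O, O') = |{α' : ∃ α, α' <_O α ∧ α <_{O'} α'}|`, the number of elements
out of order in `O'` with respect to `O`, where orderings are enumerating lists. -/
noncomputable def dOrd {S : Type*} [DecidableEq S] (O O' : List S) : ℕ :=
  Nat.card {a' : S // ∃ a : S, O.idxOf a' < O.idxOf a ∧ O'.idxOf a < O'.idxOf a'}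

namespace HardOrd

/-- binary encoding of a natural number as a string in `{0,1}^n` -/
def enc (n : ℕ) (j : ℕ) : Fin n → Bool := fun k => j.testBit k.val

/-- bitwise complement -/
def cmpl {n : ℕ} (g : Fin n → Bool) : Fin n → Bool := fun k => ! g k

/-- the m-th element of the interleaved ordering -/
def φ (n : ℕ) (m : ℕ) : Fin n → Bool :=
  if m % 2 = 0 then enc n (m / 2) else cmpl (enc n (m / 2))

/-- the interleaved ordering `β₁, β̄₁, β₂, β̄₂, …` -/
def Olist (n : ℕ) : List (Fin n → Bool) := (List.range (2 ^ n)).map (φ n)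

lemma enc_inj {n j j' : ℕ} (hj : j < 2 ^ n) (hj' : j' < 2 ^ n)
    (h : enc n j = enc n j') : j = j' := by
  apply Nat.eq_of_testBit_eq
  intro k
  by_cases hk : k < n
  · exact congrFun h ⟨k, hk⟩
  · rw [Nat.testBit_eq_false_of_lt, Nat.testBit_eq_false_of_lt]
    · exact lt_of_lt_of_le hj' (Nat.pow_le_pow_right (by norm_num) (by omega))
    · exact lt_of_lt_of_le hj (Nat.pow_le_pow_right (by norm_num) (by omega))

lemma enc_ne_cmpl {n j j' : ℕ} (hn : 0 < n) (hj : j < 2 ^ (n - 1)) (hj' : j' < 2 ^ (n - 1)) :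
    enc n j ≠ cmpl (enc n j') := by
  intro h
  have := congrFun h ⟨n - 1, by omega⟩
  simp only [enc, cmpl] at this
  rw [Nat.testBit_eq_false_of_lt hj, Nat.testBit_eq_false_of_lt hj'] at this
  simp at this

lemma bool_eq_not {x y : Bool} (h : x ≠ y) : x = !y := by
  cases x <;> cases y <;> simp_all

lemma cmpl_inj {n : ℕ} {g g' : Fin n → Bool} (h : cmpl g = cmpl g') : g = g' := by
  funext k
  have := congrFun h k
  simp only [cmpl] at this
  exact Bool.not_inj this

lemma two_pow_sub_one (n : ℕ) (hn : 0 < n) : 2 ^ n = 2 * 2 ^ (n - 1) := by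
  conv_lhs => rw [show n = (n - 1) + 1 by omega]
  rw [pow_succ]; ring

lemma φ_injOn {n : ℕ} (hn : 0 < n) {m m' : ℕ} (hm : m < 2 ^ n) (hm' : m' < 2 ^ n)
    (h : φ n m = φ n m') : m = m' := by
  have h2 := two_pow_sub_one n hn
  have hd : m / 2 < 2 ^ (n - 1) := by omega
  have hd' : m' / 2 < 2 ^ (n - 1) := by omega
  have hlt : 2 ^ (n - 1) ≤ 2 ^ n := Nat.pow_le_pow_right (by norm_num) (by omega)
  unfold φ at h
  rcases Nat.mod_two_eq_zero_or_one m with h1 | h1 <;>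
    rcases Nat.mod_two_eq_zero_or_one m' with h1' | h1' <;>
      simp [h1, h1'] at h
  · have := enc_inj (by omega) (by omega) h; omega
  · exact absurd h (enc_ne_cmpl hn hd hd')
  · exact absurd h.symm (enc_ne_cmpl hn hd' hd)
  · have := enc_inj (by omega) (by omega) (cmpl_inj h); omega

lemma Olist_nodup {n : ℕ} (hn : 0 < n) : (Olist n).Nodup := by
  apply List.Nodup.map_on _ List.nodup_range
  intro x hx y hy hxy
  exact φ_injOn hn (List.mem_range.mp hx) (List.mem_range.mp hy) hxy

lemma Olist_length (n : ℕ) : (Olist n).length = 2 ^ n := by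
  simp [Olist]

lemma Olist_mem {n : ℕ} (hn : 0 < n) (g : Fin n → Bool) : g ∈ Olist n := by
  have hcard : (Olist n).toFinset = Finset.univ := by
    apply Finset.eq_univ_of_card
    rw [List.toFinset_card_of_nodup (Olist_nodup hn), Olist_length]
    simp
  rw [← List.mem_toFinset, hcard]
  exact Finset.mem_univ g

lemma Olist_indexOf {n : ℕ} (hn : 0 < n) {m : ℕ} (hm : m < 2 ^ n) :
    (Olist n).idxOf (φ n m) = m := by
  have hlen : m < (Olist n).length := by rw [Olist_length]; exact hm
  have hget : (Olist n)[m] = φ n m := by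
    simp [Olist]
  rw [← hget]
  exact (Olist_nodup hn).idxOf_getElem m hlen

lemma φ_even {n : ℕ} (j : ℕ) : φ n (2 * j) = enc n j := by
  simp [φ, Nat.mul_mod_right, Nat.mul_div_cancel_left _ (by norm_num : 0 < 2)]

lemma φ_odd {n : ℕ} (j : ℕ) : φ n (2 * j + 1) = cmpl (enc n j) := by
  have h1 : (2 * j + 1) % 2 = 1 := by omega
  have h2 : (2 * j + 1) / 2 = j := by omega
  simp [φ, h1, h2]

lemma indexOf_enc {n : ℕ} (hn : 0 < n) {j : ℕ} (hj : j < 2 ^ (n - 1)) :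
    (Olist n).idxOf (enc n j) = 2 * j := by
  have h2 := two_pow_sub_one n hn
  rw [← φ_even j]; exact Olist_indexOf hn (by omega)

lemma indexOf_cmpl_enc {n : ℕ} (hn : 0 < n) {j : ℕ} (hj : j < 2 ^ (n - 1)) :
    (Olist n).idxOf (cmpl (enc n j)) = 2 * j + 1 := by
  have h2 := two_pow_sub_one n hn
  rw [← φ_odd j]; exact Olist_indexOf hn (by omega)

lemma leaves_agree {n : ℕ} {s : Finset (Fin n)} (T : DTree n s) :
    ∀ f g, g ∈ T.leaves f → ∀ j ∉ s, g j = f j := by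
  induction T with
  | leaf =>
    intro f g hg j _
    simp only [DTree.leaves, List.mem_singleton] at hg
    rw [hg]
  | node i b hi l r ihl ihr =>
    intro f g hg j hj
    simp only [DTree.leaves, List.mem_append] at hg
    have hjs : j ∉ _ := fun h => hj (Finset.mem_insert_of_mem h)
    have hji : j ≠ i := by rintro rfl; exact hj (Finset.mem_insert_self _ _)
    rcases hg with h | h
    · rw [ihl _ _ h j hjs, Function.update_of_ne hji]
    · rw [ihr _ _ h j hjs, Function.update_of_ne hji]

lemma mem_leaves {n : ℕ} {s : Finset (Fin n)} (T : DTree n s) :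
    ∀ f g, (∀ j ∉ s, g j = f j) → g ∈ T.leaves f := by
  induction T with
  | leaf =>
    intro f g hg
    simp only [DTree.leaves, List.mem_singleton]
    funext j
    exact hg j (Finset.notMem_empty j)
  | node i b hi l r ihl ihr =>
    intro f g hg
    simp only [DTree.leaves, List.mem_append]
    by_cases hb : g i = b
    · left
      apply ihl
      intro j hj
      by_cases hji : j = i
      · subst hji; rw [Function.update_self]; exact hb
      · rw [Function.update_of_ne hji]
        exact hg j (by simp [Finset.mem_insert, hji, hj])
    · right
      apply ihr
      intro j hj
      by_cases hji : j = i
      · subst hji; rw [Function.update_self]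
        exact bool_eq_not hb
      · rw [Function.update_of_ne hji]
        exact hg j (by simp [Finset.mem_insert, hji, hj])

/-- Key splitting property of the root of a complete tree. -/
lemma key {n : ℕ} {s : Finset (Fin n)} (T : DTree n s) (hs : s = Finset.univ)
    (hn : 0 < n) (f₀ : Fin n → Bool) :
    ∃ (i : Fin n) (b : Bool), ∀ α α' : Fin n → Bool, α i = b → α' i = !b →
      (T.leaves f₀).idxOf α < (T.leaves f₀).idxOf α' := by
  haveI : Nonempty (Fin n) := ⟨⟨0, hn⟩⟩
  cases T with
  | leaf =>
    exact absurd hs.symm (Finset.univ_nonempty.ne_empty)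
  | node i b hi l r =>
    rename_i s'
    refine ⟨i, b, fun α α' hα hα' => ?_⟩
    have his : i ∉ s' := hi
    have hall : ∀ j : Fin n, j ∉ s' → j = i := by
      intro j hj
      by_contra hji
      have : j ∈ insert i s' := hs ▸ Finset.mem_univ j
      simp [Finset.mem_insert, hji] at this
      exact hj this
    have hαL : α ∈ l.leaves (Function.update f₀ i b) := by
      apply mem_leaves
      intro j hj
      have := hall j hj
      subst this
      rw [Function.update_self]; exact hα
    have hα'L : α' ∉ l.leaves (Function.update f₀ i b) := by
      intro hmem
      have := leaves_agree l _ _ hmem i his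
      rw [Function.update_self] at this
      rw [hα'] at this
      simp at this
    simp only [DTree.leaves]
    rw [List.idxOf_append_of_mem hαL, List.idxOf_append_of_notMem hα'L]
    have := List.idxOf_lt_length_iff.mpr hαL
    omega

end HardOrd

open HardOrd in
/-- For every n > 4 there is an ordering O of {0,1}^n such that for every complete
depth-n decision tree T, the number of inversions d(O, O(T)) is at least 2^(n-2). -/
theorem exists_hard_ordering {n : ℕ} (hn : 4 < n) :
    ∃ O : List (Fin n → Bool), O.Nodup ∧ (∀ α : Fin n → Bool, α ∈ O) ∧
      ∀ T : DTree n Finset.univ, 2 ^ (n - 2) ≤ dOrd O (T.leaves (fun _ => false)) := by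
  have hn0 : 0 < n := by omega
  have h2 := two_pow_sub_one n hn0
  have h2' : 2 ^ (n - 1) = 2 * 2 ^ (n - 2) := by
    conv_lhs => rw [show n - 1 = (n - 2) + 1 by omega]
    rw [pow_succ]; ring
  have hp2 : 0 < 2 ^ (n - 2) := Nat.pow_pos (by norm_num)
  refine ⟨Olist n, Olist_nodup hn0, Olist_mem hn0, ?_⟩
  intro T
  obtain ⟨i, b, hkey⟩ := key T rfl hn0 (fun _ => false)
  set O' := T.leaves (fun _ => false) with hO'
  -- the chosen "out of order" element from pair `j`: the one in the right subtree
  set γ : ℕ → (Fin n → Bool) :=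
    fun j => if enc n j i = b then cmpl (enc n j) else enc n j with hγ
  have hγi : ∀ j, (γ j) i = !b := by
    intro j
    simp only [hγ]
    by_cases hb : enc n j i = b
    · rw [if_pos hb]; simp [cmpl, hb]
    · rw [if_neg hb]; exact bool_eq_not hb
  -- the partner of pair `j` that lies in the left subtree
  set δ : ℕ → (Fin n → Bool) :=
    fun j => if enc n j i = b then enc n j else cmpl (enc n j) with hδ
  have hδi : ∀ j, (δ j) i = b := by
    intro j
    simp only [hδ]
    by_cases hb : enc n j i = b
    · rw [if_pos hb]; exact hb
    · rw [if_neg hb]; simp only [cmpl]; rw [bool_eq_not hb]; simp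
  have hprop : ∀ j : ℕ, j < 2 ^ (n - 1) - 1 →
      ∃ a, (Olist n).idxOf (γ j) < (Olist n).idxOf a ∧
        O'.idxOf a < O'.idxOf (γ j) := by
    intro j hj
    have hj1 : j < 2 ^ (n - 1) := by omega
    have hj2 : j + 1 < 2 ^ (n - 1) := by omega
    by_cases hb : enc n j i = b
    · -- γ j = cmpl (enc n j), at position 2j+1; partner in left subtree from pair j+1
      refine ⟨δ (j + 1), ?_, hkey _ _ (hδi (j + 1)) (hγi j)⟩
      simp only [hγ, hδ]
      rw [if_pos hb]
      by_cases hb' : enc n (j + 1) i = b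
      · rw [if_pos hb', indexOf_cmpl_enc hn0 hj1, indexOf_enc hn0 hj2]; omega
      · rw [if_neg hb', indexOf_cmpl_enc hn0 hj1, indexOf_cmpl_enc hn0 hj2]; omega
    · -- γ j = enc n j, at position 2j; partner cmpl (enc n j) at 2j+1 in left subtree
      refine ⟨δ j, ?_, hkey _ _ (hδi j) (hγi j)⟩
      simp only [hγ, hδ]
      rw [if_neg hb, if_neg hb, indexOf_enc hn0 hj1, indexOf_cmpl_enc hn0 hj1]; omega
  -- build an injection from Fin (2^(n-1)-1) into the inversion set
  set P : (Fin n → Bool) → Prop :=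
    fun a' => ∃ a, (Olist n).idxOf a' < (Olist n).idxOf a ∧
      O'.idxOf a < O'.idxOf a' with hP
  have hF : ∀ j : Fin (2 ^ (n - 1) - 1), P (γ j.val) := by
    intro j
    obtain ⟨a, h1, h2⟩ := hprop j.val j.isLt
    exact ⟨a, h1, h2⟩
  set F : Fin (2 ^ (n - 1) - 1) → {a' : Fin n → Bool // P a'} :=
    fun j => ⟨γ j.val, hF j⟩ with hFdef
  have hγinj : ∀ j j' : ℕ, j < 2 ^ (n - 1) → j' < 2 ^ (n - 1) → γ j = γ j' → j = j' := by
    intro j j' hj hj' h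
    have hjn : j < 2 ^ n := by omega
    have hj'n : j' < 2 ^ n := by omega
    by_cases hb : enc n j i = b <;> by_cases hb' : enc n j' i = b <;>
      simp only [hγ, hb, hb', if_pos, if_neg] at h
    · exact enc_inj hjn hj'n (cmpl_inj h)
    · exact absurd h.symm (enc_ne_cmpl hn0 hj' hj)
    · exact absurd h (enc_ne_cmpl hn0 hj hj')
    · exact enc_inj hjn hj'n h
  have hFinj : Function.Injective F := by
    intro j j' h
    have : γ j.val = γ j'.val := congrArg Subtype.val h
    exact Fin.ext (hγinj j.val j'.val (by omega) (by omega) this)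
  have hcard : 2 ^ (n - 1) - 1 ≤ dOrd (Olist n) O' := by
    have := Nat.card_le_card_of_injective F hFinj
    rwa [Nat.card_eq_fintype_card, Fintype.card_fin] at this
  omega
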